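/- Fix 1 ≤ l ≤ L-1, s ∈ [m_l] and α ∈ ℝ. For any data S, loss ℓ, and activation σ (each differentiable), if θ is a critical point of the empirical risk of NN({m_l}_{l=0}^L), i.e., ∇_θ R_S(θ) = 0, then T^α_{l,s}(θ) is a critical point of the empirical risk of the one-neuron-wider network, i.e., ∇_θ R_S(T^α_{l,s}(θ)) = 0. -/

import Mathlib

namespace EmbeddingPrinciple

/-- Parameters of a fully-connected NN: `(θ l).1 i j` is the weight `W^{[l+1]}_{ij}`
and `(θ l).2 i` is the bias `b^{[l+1]}_i` (the paper's layer `l` corresponds to index `l-1`).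
Only the coordinates below the widths are meaningful for a concrete architecture. -/
abbrev NNParams : Type := ℕ → (ℕ → ℕ → ℝ) × (ℕ → ℝ)

/-- Feature vectors `f^{[l]}` (entrywise activation `σ`); `m` is the width function. -/
noncomputable def feat (σ : ℝ → ℝ) (m : ℕ → ℕ) (θ : NNParams) (x : ℕ → ℝ) : ℕ → ℕ → ℝ
  | 0 => x
  | l + 1 => fun i =>
      σ ((∑ j ∈ Finset.range (m l), (θ l).1 i j * feat σ m θ x l j) + (θ l).2 i)

/-- Pre-activation of layer `l+1`: `W^{[l+1]} f^{[l]} + b^{[l+1]}`. -/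
noncomputable def preact (σ : ℝ → ℝ) (m : ℕ → ℕ) (θ : NNParams) (x : ℕ → ℝ) (l i : ℕ) : ℝ :=
  (∑ j ∈ Finset.range (m l), (θ l).1 i j * feat σ m θ x l j) + (θ l).2 i

/-- Output `f_θ` of the `(K+1)`-layer network (the paper's `L` is `K+1`). -/
noncomputable def nnOut (σ : ℝ → ℝ) (m : ℕ → ℕ) (K : ℕ) (θ : NNParams) (x : ℕ → ℝ) :
    ℕ → ℝ := fun i => preact σ m θ x K i

/-- Feature gradient `g^{[l+1]} = σ'(W^{[l+1]} f^{[l]} + b^{[l+1]})`. -/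
noncomputable def gFeat (σ : ℝ → ℝ) (m : ℕ → ℕ) (θ : NNParams) (x : ℕ → ℝ) (l i : ℕ) : ℝ :=
  deriv σ (preact σ m θ x l i)

/-- Output truncated to the valid output coordinates. -/
noncomputable def truncOut (σ : ℝ → ℝ) (m : ℕ → ℕ) (K : ℕ) (θ : NNParams) (x : ℕ → ℝ) :
    ℕ → ℝ := fun i => if i < m (K + 1) then nnOut σ m K θ x i else 0

/-- Empirical risk `R_S(θ) = (1/n) ∑ᵢ ℓ(f_θ(xᵢ), yᵢ)`. -/
noncomputable def risk (σ : ℝ → ℝ) (m : ℕ → ℕ) (K : ℕ)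
    (loss : (ℕ → ℝ) → (ℕ → ℝ) → ℝ) {n : ℕ} (X Y : Fin n → ℕ → ℝ) (θ : NNParams) : ℝ :=
  (n : ℝ)⁻¹ * ∑ a : Fin n, loss (truncOut σ m K θ (X a)) (Y a)

/-- Update a single weight coordinate. -/
def updW (θ : NNParams) (l i j : ℕ) (t : ℝ) : NNParams := fun l' =>
  if l' = l then ((fun i' j' => if i' = i ∧ j' = j then t else (θ l).1 i' j'), (θ l).2)
  else θ l'

/-- Update a single bias coordinate. -/
def updB (θ : NNParams) (l i : ℕ) (t : ℝ) : NNParams := fun l' =>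
  if l' = l then ((θ l).1, fun i' => if i' = i then t else (θ l).2 i') else θ l'

/-- `θ` is a critical point of `R` : all partial derivatives with respect to the valid
coordinates of the `(K+1)`-layer architecture with width function `m` vanish. -/
def IsCritical (R : NNParams → ℝ) (m : ℕ → ℕ) (K : ℕ) (θ : NNParams) : Prop :=
  (∀ l, l ≤ K → ∀ i, i < m (l + 1) → ∀ j, j < m l →
      deriv (fun t => R (updW θ l i j t)) ((θ l).1 i j) = 0) ∧
  (∀ l, l ≤ K → ∀ i, i < m (l + 1) →
      deriv (fun t => R (updB θ l i t)) ((θ l).2 i) = 0)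

/-- Equality of two parameter tuples on all valid coordinates of the architecture. -/
def ParamEqOn (m : ℕ → ℕ) (K : ℕ) (θ₁ θ₂ : NNParams) : Prop :=
  ∀ l, l ≤ K → ∀ i, i < m (l + 1) →
    (∀ j, j < m l → (θ₁ l).1 i j = (θ₂ l).1 i j) ∧ (θ₁ l).2 i = (θ₂ l).2 i

/-- Error vectors by reversed index: `errRev … t = z^{[K+1-t]}`, where `z^{[K+1]} = ∇ℓ`
(represented by the function `dloss`) and `z^{[l]} = (W^{[l+1]})ᵀ (z^{[l+1]} ∘ g^{[l+1]})`. -/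
noncomputable def errRev (σ : ℝ → ℝ) (m : ℕ → ℕ) (K : ℕ) (θ : NNParams)
    (dloss : (ℕ → ℝ) → (ℕ → ℝ) → ℕ → ℝ) (x y : ℕ → ℝ) : ℕ → ℕ → ℝ
  | 0 => dloss (truncOut σ m K θ x) y
  | t + 1 => fun j =>
      ∑ i ∈ Finset.range (m (K + 1 - t)),
        (θ (K - t)).1 i j *
          (errRev σ m K θ dloss x y t i * (if t = 0 then 1 else gFeat σ m θ x (K - t) i))

/-- `e^{[l]} = z^{[l]} ∘ g^{[l]}` (with `g^{[K+1]} = 1`). -/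
noncomputable def errE (σ : ℝ → ℝ) (m : ℕ → ℕ) (K : ℕ) (θ : NNParams)
    (dloss : (ℕ → ℝ) → (ℕ → ℝ) → ℕ → ℝ) (x y : ℕ → ℝ) (l i : ℕ) : ℝ :=
  errRev σ m K θ dloss x y (K + 1 - l) i *
    (if l = K + 1 then 1 else gFeat σ m θ x (l - 1) i)

/-- Differentiability of the loss in its first argument (on each finite-dimensional
coordinate block). -/
def LossDiff (loss : (ℕ → ℝ) → (ℕ → ℝ) → ℝ) : Prop :=
  ∀ (y : ℕ → ℝ) (d : ℕ),
    Differentiable ℝ (fun u : Fin d → ℝ => loss (fun i => if h : i < d then u ⟨i, h⟩ else 0) y)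

/-- Widths after adding one neuron in the paper's layer `p+1`. -/
def widen (m : ℕ → ℕ) (p : ℕ) : ℕ → ℕ := fun l => if l = p + 1 then m (p + 1) + 1 else m l

/-- One-step null embedding `T^α_{l,0}` at the paper's layer `l = p+1`. -/
def nullEmb (m : ℕ → ℕ) (p : ℕ) (α : ℝ) (θ : NNParams) : NNParams := fun l =>
  if l = p then
    ((fun i j => if i = m (p + 1) then 0 else (θ p).1 i j),
     (fun i => if i = m (p + 1) then α else (θ p).2 i))
  else if l = p + 1 then
    ((fun i j => if j = m (p + 1) then 0 else (θ (p + 1)).1 i j), (θ (p + 1)).2)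
  else θ l

/-- One-step splitting embedding `T^α_{l,s}` at the paper's layer `l = p+1`,
splitting neuron `s`. -/
def splitEmb (m : ℕ → ℕ) (p s : ℕ) (α : ℝ) (θ : NNParams) : NNParams := fun l =>
  if l = p then
    ((fun i j => if i = m (p + 1) then (θ p).1 s j else (θ p).1 i j),
     (fun i => if i = m (p + 1) then (θ p).2 s else (θ p).2 i))
  else if l = p + 1 then
    ((fun i j =>
        if j = s then (1 - α) * (θ (p + 1)).1 i s
        else if j = m (p + 1) then α * (θ (p + 1)).1 i s
        else (θ (p + 1)).1 i j),
     (θ (p + 1)).2)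
  else θ l

section Aux

/-- Generalized one-step embedding: copy row `s` at layer `p`, and at layer `p+1`
move weight `c i` from column `s` to the new column `m (p+1)`. -/
def genEmb (m : ℕ → ℕ) (p s : ℕ) (θ : NNParams) (c : ℕ → ℝ) : NNParams := fun l =>
  if l = p then
    ((fun i j => if i = m (p + 1) then (θ p).1 s j else (θ p).1 i j),
     (fun i => if i = m (p + 1) then (θ p).2 s else (θ p).2 i))
  else if l = p + 1 then
    ((fun i j => if j = s then (θ (p + 1)).1 i s - c i
        else if j = m (p + 1) then c i else (θ (p + 1)).1 i j),
     (θ (p + 1)).2)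
  else θ l

/-- Features from a given layer-`q` feature vector `u`. -/
noncomputable def featFrom (σ : ℝ → ℝ) (m : ℕ → ℕ) (θ : NNParams) (q : ℕ) (u : ℕ → ℝ) :
    ℕ → ℕ → ℝ
  | 0 => u
  | t + 1 => fun i =>
      σ ((∑ j ∈ Finset.range (m (q + t)), (θ (q + t)).1 i j * featFrom σ m θ q u t j)
        + (θ (q + t)).2 i)

/-- Truncated output as a function of the layer-`(p+1)` feature vector. -/
noncomputable def outE (σ : ℝ → ℝ) (m : ℕ → ℕ) (K p : ℕ) (θ : NNParams) (u : ℕ → ℝ) :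
    ℕ → ℝ := fun i =>
  if i < m (K + 1) then
    (∑ j ∈ Finset.range (m K), (θ K).1 i j * featFrom σ m θ (p + 1) u (K - (p + 1)) j)
      + (θ K).2 i
  else 0

lemma feat_congr (σ : ℝ → ℝ) {m₁ m₂ : ℕ → ℕ} {θ₁ θ₂ : NNParams} (x : ℕ → ℝ) :
    ∀ l, (∀ l', l' < l → m₁ l' = m₂ l' ∧ θ₁ l' = θ₂ l') →
      feat σ m₁ θ₁ x l = feat σ m₂ θ₂ x l := by
  intro l
  induction l with
  | zero => intro _; rfl
  | succ l ih =>
    intro h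
    funext i
    have hl := h l (Nat.lt_succ_self l)
    simp only [feat]
    rw [ih (fun l' hl' => h l' (hl'.trans (Nat.lt_succ_self l))), hl.1, hl.2]

lemma sum_split_at {M s : ℕ} (hs : s < M) (f g : ℕ → ℝ)
    (hfg : ∀ j, j < M → j ≠ s → f j = g j) :
    ∑ j ∈ Finset.range M, f j = ((∑ j ∈ Finset.range M, g j) - g s) + f s := by
  have hmem : s ∈ Finset.range M := Finset.mem_range.mpr hs
  rw [Finset.sum_eq_sum_sdiff_singleton_add hmem f, Finset.sum_eq_sum_sdiff_singleton_add hmem g]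
  have : ∑ j ∈ Finset.range M \ {s}, f j = ∑ j ∈ Finset.range M \ {s}, g j := by
    apply Finset.sum_congr rfl
    intro j hj
    rcases Finset.mem_sdiff.mp hj with ⟨hj1, hj2⟩
    exact hfg j (Finset.mem_range.mp hj1) (by simpa using hj2)
  rw [this]; ring

/-- Master lemma: if the layer-`(p+1)` preactivation of a (possibly widened) network
agrees with the reference network fed with vector `u`, then so does the output. -/
lemma preactK_eq (σ : ℝ → ℝ) (m : ℕ → ℕ) (K p : ℕ) (hpK : p + 1 ≤ K) (θ : NNParams)
    (m' : ℕ → ℕ) (hm : ∀ l, p + 2 ≤ l → m' l = m l)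
    (θ' : NNParams) (hθ : ∀ l, p + 2 ≤ l → θ' l = θ l)
    (x u : ℕ → ℝ)
    (hu : ∀ i, preact σ m' θ' x (p + 1) i =
      (∑ j ∈ Finset.range (m (p + 1)), (θ (p + 1)).1 i j * u j) + (θ (p + 1)).2 i) :
    ∀ i, preact σ m' θ' x K i =
      (∑ j ∈ Finset.range (m K), (θ K).1 i j * featFrom σ m θ (p + 1) u (K - (p + 1)) j)
        + (θ K).2 i := by
  have key : ∀ t, feat σ m' θ' x (p + 2 + t) = fun j => featFrom σ m θ (p + 1) u (t + 1) j := by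
    intro t
    induction t with
    | zero =>
      funext j
      have e1 : feat σ m' θ' x (p + 2 + 0) j = σ (preact σ m' θ' x (p + 1) j) := rfl
      rw [e1, hu j]
      simp only [featFrom]
    | succ t ih =>
      funext j
      show feat σ m' θ' x ((p + 2 + t) + 1) j = _
      simp only [feat]
      rw [ih, hm _ (by omega), hθ _ (by omega)]
      show σ ((∑ j' ∈ Finset.range (m (p + 2 + t)),
          (θ (p + 2 + t)).1 j j' * featFrom σ m θ (p + 1) u (t + 1) j') + (θ (p + 2 + t)).2 j) = _
      simp only [featFrom]
      have h1 : p + 1 + (t + 1) = p + 2 + t := by omega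
      rw [h1]
  intro i
  rcases Nat.eq_or_lt_of_le hpK with hK1 | hK2
  · have h0 : K - (p + 1) = 0 := by omega
    rw [h0]
    simp only [featFrom]
    rw [← hK1]
    exact hu i
  · have hK3 : p + 2 ≤ K := hK2
    obtain ⟨t, ht⟩ : ∃ t, K = p + 2 + t := ⟨K - (p + 2), by omega⟩
    subst ht
    simp only [preact]
    rw [hm _ (by omega), hθ _ (by omega), key t]
    have h1 : p + 2 + t - (p + 1) = t + 1 := by omega
    rw [h1]

lemma risk_eq_outE (σ : ℝ → ℝ) (m : ℕ → ℕ) (K p : ℕ) (hpK : p + 1 ≤ K) (θ : NNParams)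
    (m' : ℕ → ℕ) (hm : ∀ l, p + 2 ≤ l → m' l = m l)
    (θ' : NNParams) (hθ : ∀ l, p + 2 ≤ l → θ' l = θ l)
    (loss : (ℕ → ℝ) → (ℕ → ℝ) → ℝ) {n : ℕ} (X Y : Fin n → ℕ → ℝ)
    (u : Fin n → ℕ → ℝ)
    (hu : ∀ a i, preact σ m' θ' (X a) (p + 1) i =
      (∑ j ∈ Finset.range (m (p + 1)), (θ (p + 1)).1 i j * u a j) + (θ (p + 1)).2 i) :
    risk σ m' K loss X Y θ' = (n : ℝ)⁻¹ * ∑ a : Fin n, loss (outE σ m K p θ (u a)) (Y a) := by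
  unfold risk
  congr 1
  apply Finset.sum_congr rfl
  intro a _
  congr 1
  funext i
  simp only [truncOut, nnOut, outE]
  rw [hm (K + 1) (by omega)]
  by_cases h : i < m (K + 1)
  · rw [if_pos h, if_pos h, preactK_eq σ m K p hpK θ m' hm θ' hθ (X a) (u a) (hu a) i]
  · rw [if_neg h, if_neg h]

lemma widen_ne (m : ℕ → ℕ) (p l : ℕ) (h : l ≠ p + 1) : widen m p l = m l := if_neg h

lemma widen_p1 (m : ℕ → ℕ) (p : ℕ) : widen m p (p + 1) = m (p + 1) + 1 := if_pos rfl

lemma genEmb_ne (m : ℕ → ℕ) (p s : ℕ) (θ : NNParams) (c : ℕ → ℝ) {l : ℕ}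
    (h1 : l ≠ p) (h2 : l ≠ p + 1) : genEmb m p s θ c l = θ l := by
  simp [genEmb, h1, h2]

lemma feat_genEmb_le (σ : ℝ → ℝ) (m : ℕ → ℕ) (p s : ℕ) (θ : NNParams) (c : ℕ → ℝ)
    (x : ℕ → ℝ) (l : ℕ) (hl : l ≤ p) :
    feat σ (widen m p) (genEmb m p s θ c) x l = feat σ m θ x l :=
  feat_congr σ x l (fun l' hl' =>
    ⟨widen_ne m p l' (by omega), genEmb_ne m p s θ c (by omega) (by omega)⟩)

lemma feat_genEmb_p1 (σ : ℝ → ℝ) (m : ℕ → ℕ) (p s : ℕ) (θ : NNParams) (c : ℕ → ℝ)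
    (x : ℕ → ℝ) (j : ℕ) :
    feat σ (widen m p) (genEmb m p s θ c) x (p + 1) j
      = feat σ m θ x (p + 1) (if j = m (p + 1) then s else j) := by
  have e1 : feat σ (widen m p) (genEmb m p s θ c) x (p + 1) j
      = σ ((∑ j' ∈ Finset.range (widen m p p),
            ((genEmb m p s θ c) p).1 j j' * feat σ (widen m p) (genEmb m p s θ c) x p j')
          + ((genEmb m p s θ c) p).2 j) := rfl
  have e2 : ∀ i, feat σ m θ x (p + 1) i
      = σ ((∑ j' ∈ Finset.range (m p), (θ p).1 i j' * feat σ m θ x p j') + (θ p).2 i) :=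
    fun i => rfl
  rw [e1, feat_genEmb_le σ m p s θ c x p le_rfl, widen_ne m p p (by omega)]
  by_cases hj : j = m (p + 1)
  · rw [if_pos hj, e2]
    congr 1
    simp [genEmb, hj]
  · rw [if_neg hj, e2]
    congr 1
    simp [genEmb, hj]

lemma preact_genEmb_p1 (σ : ℝ → ℝ) (m : ℕ → ℕ) (p s : ℕ) (hs : s < m (p + 1))
    (θ : NNParams) (c : ℕ → ℝ) (x : ℕ → ℝ) (i : ℕ) :
    preact σ (widen m p) (genEmb m p s θ c) x (p + 1) i
      = (∑ j ∈ Finset.range (m (p + 1)), (θ (p + 1)).1 i j * feat σ m θ x (p + 1) j)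
        + (θ (p + 1)).2 i := by
  simp only [preact]
  have hg1 : ((genEmb m p s θ c) (p + 1)).1 = fun i j =>
      if j = s then (θ (p + 1)).1 i s - c i
      else if j = m (p + 1) then c i else (θ (p + 1)).1 i j := by
    simp [genEmb]
  have hg2 : ((genEmb m p s θ c) (p + 1)).2 = (θ (p + 1)).2 := by
    simp [genEmb]
  rw [hg1, hg2, widen_p1, Finset.sum_range_succ]
  have hMs : ¬ (m (p + 1) = s) := by omega
  have hss : ¬ (s = m (p + 1)) := by omega
  have hsum := sum_split_at hs
    (fun j => (if j = s then (θ (p + 1)).1 i s - c i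
      else if j = m (p + 1) then c i else (θ (p + 1)).1 i j)
        * feat σ (widen m p) (genEmb m p s θ c) x (p + 1) j)
    (fun j => (θ (p + 1)).1 i j * feat σ m θ x (p + 1) j)
    (by
      intro j hj hjs
      rw [if_neg hjs, if_neg (by omega), feat_genEmb_p1, if_neg (by omega)])
  rw [hsum]
  simp only [feat_genEmb_p1, hMs, hss, ite_self, ite_true, ite_false, eq_self_iff_true,
    if_true, if_false]
  ring

lemma risk_genEmb (σ : ℝ → ℝ) (m : ℕ → ℕ) (K p s : ℕ) (hs : s < m (p + 1))
    (hpK : p + 1 ≤ K) (loss : (ℕ → ℝ) → (ℕ → ℝ) → ℝ) {n : ℕ} (X Y : Fin n → ℕ → ℝ)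
    (θ₂ : NNParams) (c : ℕ → ℝ) :
    risk σ (widen m p) K loss X Y (genEmb m p s θ₂ c) = risk σ m K loss X Y θ₂ := by
  rw [risk_eq_outE σ m K p hpK θ₂ (widen m p) (fun l hl => widen_ne m p l (by omega))
    (genEmb m p s θ₂ c) (fun l hl => genEmb_ne m p s θ₂ c (by omega) (by omega)) loss X Y
    (fun a => feat σ m θ₂ (X a) (p + 1))
    (fun a i => preact_genEmb_p1 σ m p s hs θ₂ c (X a) i)]
  rw [risk_eq_outE σ m K p hpK θ₂ m (fun l _ => rfl) θ₂ (fun l _ => rfl) loss X Y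
    (fun a => feat σ m θ₂ (X a) (p + 1)) (fun a i => rfl)]

lemma splitEmb_eq_genEmb (m : ℕ → ℕ) (p s : ℕ) (α : ℝ) (θ : NNParams) :
    splitEmb m p s α θ = genEmb m p s θ (fun i => α * (θ (p + 1)).1 i s) := by
  funext l
  simp only [splitEmb, genEmb]
  by_cases h1 : l = p
  · rw [if_pos h1, if_pos h1]
  · rw [if_neg h1, if_neg h1]
    by_cases h2 : l = p + 1
    · rw [if_pos h2, if_pos h2]
      refine Prod.ext ?_ rfl
      funext i j
      dsimp only
      by_cases h3 : j = s
      · rw [if_pos h3, if_pos h3]; ring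
      · rw [if_neg h3, if_neg h3]
    · rw [if_neg h2, if_neg h2]

lemma featFrom_update_diff (σ : ℝ → ℝ) (hσ : Differentiable ℝ σ) (m : ℕ → ℕ)
    (θ : NNParams) (q : ℕ) (w : ℕ → ℝ) (s : ℕ) :
    ∀ t j, Differentiable ℝ (fun v => featFrom σ m θ q (Function.update w s v) t j) := by
  intro t
  induction t with
  | zero =>
    intro j
    by_cases h : j = s
    · subst h
      simp only [featFrom, Function.update_self]
      exact differentiable_id
    · simp only [featFrom, Function.update_of_ne h]
      exact differentiable_const _
  | succ t ih =>
    intro i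
    have e : (fun v => featFrom σ m θ q (Function.update w s v) (t + 1) i)
        = fun v => σ ((∑ j ∈ Finset.range (m (q + t)),
            (θ (q + t)).1 i j * featFrom σ m θ q (Function.update w s v) t j)
          + (θ (q + t)).2 i) := rfl
    rw [e]
    exact hσ.comp ((Differentiable.fun_sum (fun j _ => (ih j).const_mul _)).add_const _)

lemma psi_diff (σ : ℝ → ℝ) (hσ : Differentiable ℝ σ) (m : ℕ → ℕ) (K p : ℕ)
    (θ : NNParams) (w : ℕ → ℝ) (s : ℕ) (y : ℕ → ℝ)
    (loss : (ℕ → ℝ) → (ℕ → ℝ) → ℝ) (hloss : LossDiff loss) :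
    Differentiable ℝ (fun v => loss (outE σ m K p θ (Function.update w s v)) y) := by
  have key : (fun v => loss (outE σ m K p θ (Function.update w s v)) y)
      = (fun u : Fin (m (K + 1)) → ℝ =>
          loss (fun i => if h : i < m (K + 1) then u ⟨i, h⟩ else 0) y)
        ∘ (fun v (i : Fin (m (K + 1))) =>
            (∑ j ∈ Finset.range (m K),
              (θ K).1 i j * featFrom σ m θ (p + 1) (Function.update w s v) (K - (p + 1)) j)
              + (θ K).2 i) := by
    funext v
    simp only [Function.comp_apply]
    congr 1
  rw [key]
  exact (hloss y (m (K + 1))).comp (differentiable_pi.mpr (fun i =>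
    (Differentiable.fun_sum (fun j _ =>
      (featFrom_update_diff σ hσ m θ (p + 1) w s _ j).const_mul _)).add_const _))

lemma split_deriv_zero {n : ℕ} (Ψ F : Fin n → ℝ → ℝ)
    (hΨ : ∀ a, Differentiable ℝ (Ψ a)) (hF : ∀ a, Differentiable ℝ (F a))
    (t₀ β γ : ℝ) (hβγ : β + γ = 1)
    (h0 : deriv (fun t => (n : ℝ)⁻¹ * ∑ a : Fin n, Ψ a (F a t)) t₀ = 0) :
    deriv (fun t => (n : ℝ)⁻¹ * ∑ a : Fin n, Ψ a (β * F a t + γ * F a t₀)) t₀ = 0 := by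
  have hg : HasDerivAt (fun t => (n : ℝ)⁻¹ * ∑ a : Fin n, Ψ a (F a t))
      ((n : ℝ)⁻¹ * ∑ a : Fin n, deriv (Ψ a) (F a t₀) * deriv (F a) t₀) t₀ := by
    apply HasDerivAt.const_mul
    apply HasDerivAt.fun_sum
    intro a _
    exact ((hΨ a (F a t₀)).hasDerivAt).comp t₀ ((hF a t₀).hasDerivAt)
  have h0' : (n : ℝ)⁻¹ * ∑ a : Fin n, deriv (Ψ a) (F a t₀) * deriv (F a) t₀ = 0 := by
    rw [← hg.deriv]; exact h0
  have hpt : ∀ a : Fin n, β * F a t₀ + γ * F a t₀ = F a t₀ := by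
    intro a; rw [← add_mul, hβγ, one_mul]
  have hh : HasDerivAt (fun t => (n : ℝ)⁻¹ * ∑ a : Fin n, Ψ a (β * F a t + γ * F a t₀))
      ((n : ℝ)⁻¹ * ∑ a : Fin n, deriv (Ψ a) (F a t₀) * (β * deriv (F a) t₀)) t₀ := by
    apply HasDerivAt.const_mul
    apply HasDerivAt.fun_sum
    intro a _
    have h1 : HasDerivAt (fun t => β * F a t + γ * F a t₀) (β * deriv (F a) t₀) t₀ :=
      (((hF a t₀).hasDerivAt).const_mul β).add_const _
    have h2 : HasDerivAt (Ψ a) (deriv (Ψ a) (F a t₀)) (β * F a t₀ + γ * F a t₀) := by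
      rw [hpt a]; exact (hΨ a (F a t₀)).hasDerivAt
    exact h2.comp t₀ h1
  rw [hh.deriv]
  have : (n : ℝ)⁻¹ * ∑ a : Fin n, deriv (Ψ a) (F a t₀) * (β * deriv (F a) t₀)
      = β * ((n : ℝ)⁻¹ * ∑ a : Fin n, deriv (Ψ a) (F a t₀) * deriv (F a) t₀) := by
    rw [Finset.mul_sum, Finset.mul_sum, Finset.mul_sum]
    apply Finset.sum_congr rfl
    intro a _
    ring
  rw [this, h0', mul_zero]


lemma updW_apply_same (θ : NNParams) (l i j : ℕ) (t : ℝ) :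
    updW θ l i j t l = ((fun i' j' => if i' = i ∧ j' = j then t else (θ l).1 i' j'), (θ l).2) :=
  if_pos rfl

lemma updW_apply_ne (θ : NNParams) (l i j : ℕ) (t : ℝ) {l' : ℕ} (h : l' ≠ l) :
    updW θ l i j t l' = θ l' := if_neg h

lemma updB_apply_same (θ : NNParams) (l i : ℕ) (t : ℝ) :
    updB θ l i t l = ((θ l).1, fun i' => if i' = i then t else (θ l).2 i') := if_pos rfl

lemma updB_apply_ne (θ : NNParams) (l i : ℕ) (t : ℝ) {l' : ℕ} (h : l' ≠ l) :
    updB θ l i t l' = θ l' := if_neg h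

lemma genEmb_apply_p (m : ℕ → ℕ) (p s : ℕ) (θ : NNParams) (c : ℕ → ℝ) :
    genEmb m p s θ c p
      = ((fun i j => if i = m (p + 1) then (θ p).1 s j else (θ p).1 i j),
         (fun i => if i = m (p + 1) then (θ p).2 s else (θ p).2 i)) := if_pos rfl

lemma genEmb_apply_p1 (m : ℕ → ℕ) (p s : ℕ) (θ : NNParams) (c : ℕ → ℝ) :
    genEmb m p s θ c (p + 1)
      = ((fun i j => if j = s then (θ (p + 1)).1 i s - c i
            else if j = m (p + 1) then c i else (θ (p + 1)).1 i j),
         (θ (p + 1)).2) := by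
  simp [genEmb]

lemma updW_genEmb_comm (m : ℕ → ℕ) (p s : ℕ) (θ : NNParams) (c : ℕ → ℝ) (l i j : ℕ) (t : ℝ)
    (hl : l ≠ p) (hl1 : l ≠ p + 1) :
    updW (genEmb m p s θ c) l i j t = genEmb m p s (updW θ l i j t) c := by
  funext l'
  by_cases ha : l' = l
  · subst ha
    rw [updW_apply_same, genEmb_ne m p s θ c hl hl1, genEmb_ne m p s _ c hl hl1,
      updW_apply_same]
  · rw [updW_apply_ne _ _ _ _ _ ha]
    by_cases hb : l' = p
    · subst hb
      rw [genEmb_apply_p, genEmb_apply_p, updW_apply_ne _ _ _ _ _ (fun h => hl h.symm)]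
    · by_cases hc : l' = p + 1
      · subst hc
        rw [genEmb_apply_p1, genEmb_apply_p1, updW_apply_ne _ _ _ _ _ (fun h => hl1 h.symm)]
      · rw [genEmb_ne m p s θ c hb hc, genEmb_ne m p s _ c hb hc,
          updW_apply_ne _ _ _ _ _ ha]

lemma updB_genEmb_comm (m : ℕ → ℕ) (p s : ℕ) (θ : NNParams) (c : ℕ → ℝ) (l i : ℕ) (t : ℝ)
    (hl : l ≠ p) :
    updB (genEmb m p s θ c) l i t = genEmb m p s (updB θ l i t) c := by
  funext l'
  by_cases ha : l' = l
  · subst ha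
    by_cases hc : l' = p + 1
    · subst hc
      rw [updB_apply_same, genEmb_apply_p1, genEmb_apply_p1, updB_apply_same]
    · rw [updB_apply_same, genEmb_ne m p s θ c hl hc, genEmb_ne m p s _ c hl hc,
        updB_apply_same]
  · rw [updB_apply_ne _ _ _ _ ha]
    by_cases hb : l' = p
    · subst hb
      rw [genEmb_apply_p, genEmb_apply_p, updB_apply_ne _ _ _ _ (fun h => hl h.symm)]
    · by_cases hc : l' = p + 1
      · subst hc
        rw [genEmb_apply_p1, genEmb_apply_p1, updB_apply_ne _ _ _ _ (fun h => ha h)]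
      · rw [genEmb_ne m p s θ c hb hc, genEmb_ne m p s _ c hb hc,
          updB_apply_ne _ _ _ _ ha]

lemma updW_genEmb_comm_p (m : ℕ → ℕ) (p s : ℕ) (θ : NNParams) (c : ℕ → ℝ) (i j : ℕ) (t : ℝ)
    (his : i ≠ s) (hiM : i ≠ m (p + 1)) :
    updW (genEmb m p s θ c) p i j t = genEmb m p s (updW θ p i j t) c := by
  funext l'
  by_cases ha : l' = p
  · rw [ha, updW_apply_same, genEmb_apply_p, genEmb_apply_p, updW_apply_same]
    dsimp only
    refine Prod.ext ?_ rfl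
    funext i' j'
    dsimp only
    split_ifs <;> first | rfl | ring1 | (exfalso; omega) | (simp_all; try ring1)
  · rw [updW_apply_ne _ _ _ _ _ ha]
    by_cases hc : l' = p + 1
    · rw [hc, genEmb_apply_p1, genEmb_apply_p1, updW_apply_ne _ _ _ _ _ (by omega : p + 1 ≠ p)]
    · rw [genEmb_ne m p s θ c ha hc, genEmb_ne m p s _ c ha hc,
        updW_apply_ne _ _ _ _ _ ha]

lemma updB_genEmb_comm_p (m : ℕ → ℕ) (p s : ℕ) (θ : NNParams) (c : ℕ → ℝ) (i : ℕ) (t : ℝ)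
    (his : i ≠ s) (hiM : i ≠ m (p + 1)) :
    updB (genEmb m p s θ c) p i t = genEmb m p s (updB θ p i t) c := by
  funext l'
  by_cases ha : l' = p
  · rw [ha, updB_apply_same, genEmb_apply_p, genEmb_apply_p, updB_apply_same]
    dsimp only
    refine Prod.ext rfl ?_
    funext i'
    dsimp only
    split_ifs <;> first | rfl | ring1 | (exfalso; omega) | (simp_all; try ring1)
  · rw [updB_apply_ne _ _ _ _ ha]
    by_cases hc : l' = p + 1
    · rw [hc, genEmb_apply_p1, genEmb_apply_p1, updB_apply_ne _ _ _ _ (by omega : p + 1 ≠ p)]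
    · rw [genEmb_ne m p s θ c ha hc, genEmb_ne m p s _ c ha hc,
        updB_apply_ne _ _ _ _ ha]

lemma updW_genEmb_col_s (m : ℕ → ℕ) (p s : ℕ) (θ : NNParams) (c : ℕ → ℝ) (i : ℕ) (t : ℝ)
    (hs : s < m (p + 1)) :
    updW (genEmb m p s θ c) (p + 1) i s t
      = genEmb m p s (updW θ (p + 1) i s (t + c i)) c := by
  have hsM : ¬ (s = m (p + 1)) := by omega
  funext l'
  by_cases ha : l' = p + 1
  · rw [ha, updW_apply_same, genEmb_apply_p1, genEmb_apply_p1, updW_apply_same]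
    dsimp only
    refine Prod.ext ?_ rfl
    funext i' j'
    dsimp only
    split_ifs <;> first | rfl | ring1 | (exfalso; omega) | (simp_all; try ring1)
  · rw [updW_apply_ne _ _ _ _ _ ha]
    by_cases hb : l' = p
    · rw [hb, genEmb_apply_p, genEmb_apply_p, updW_apply_ne _ _ _ _ _ (by omega : p ≠ p + 1)]
    · rw [genEmb_ne m p s θ c hb ha, genEmb_ne m p s _ c hb ha,
        updW_apply_ne _ _ _ _ _ ha]

lemma updW_genEmb_col_M (m : ℕ → ℕ) (p s : ℕ) (θ : NNParams) (c : ℕ → ℝ) (i : ℕ) (t : ℝ)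
    (hs : s < m (p + 1)) :
    updW (genEmb m p s θ c) (p + 1) i (m (p + 1)) t
      = genEmb m p s (updW θ (p + 1) i s (((θ (p + 1)).1 i s - c i) + t))
          (Function.update c i t) := by
  have hsM : ¬ (s = m (p + 1)) := by omega
  funext l'
  by_cases ha : l' = p + 1
  · rw [ha, updW_apply_same, genEmb_apply_p1, genEmb_apply_p1, updW_apply_same]
    dsimp only
    refine Prod.ext ?_ rfl
    funext i' j'
    dsimp only
    simp only [Function.update_apply]
    split_ifs <;> first | rfl | ring1 | (exfalso; omega) | (simp_all; try ring1)
  · rw [updW_apply_ne _ _ _ _ _ ha]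
    by_cases hb : l' = p
    · rw [hb, genEmb_apply_p, genEmb_apply_p, updW_apply_ne _ _ _ _ _ (by omega : p ≠ p + 1)]
    · rw [genEmb_ne m p s θ c hb ha, genEmb_ne m p s _ _ hb ha,
        updW_apply_ne _ _ _ _ _ ha]

lemma splitEmb_apply_p (m : ℕ → ℕ) (p s : ℕ) (α : ℝ) (θ : NNParams) :
    splitEmb m p s α θ p
      = ((fun i j => if i = m (p + 1) then (θ p).1 s j else (θ p).1 i j),
         (fun i => if i = m (p + 1) then (θ p).2 s else (θ p).2 i)) := if_pos rfl

lemma splitEmb_apply_p1 (m : ℕ → ℕ) (p s : ℕ) (α : ℝ) (θ : NNParams) :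
    splitEmb m p s α θ (p + 1)
      = ((fun i j => if j = s then (1 - α) * (θ (p + 1)).1 i s
          else if j = m (p + 1) then α * (θ (p + 1)).1 i s else (θ (p + 1)).1 i j),
         (θ (p + 1)).2) := by
  simp [splitEmb]

lemma splitEmb_ne (m : ℕ → ℕ) (p s : ℕ) (α : ℝ) (θ : NNParams) {l : ℕ}
    (h1 : l ≠ p) (h2 : l ≠ p + 1) : splitEmb m p s α θ l = θ l := by
  simp [splitEmb, h1, h2]

lemma updW_genEmb_comm_p1 (m : ℕ → ℕ) (p s : ℕ) (θ : NNParams) (c : ℕ → ℝ) (i j : ℕ) (t : ℝ)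
    (hjs : j ≠ s) (hjM : j ≠ m (p + 1)) :
    updW (genEmb m p s θ c) (p + 1) i j t = genEmb m p s (updW θ (p + 1) i j t) c := by
  funext l'
  by_cases ha : l' = p + 1
  · rw [ha, updW_apply_same, genEmb_apply_p1, genEmb_apply_p1, updW_apply_same]
    dsimp only
    refine Prod.ext ?_ rfl
    funext i' j'
    dsimp only
    split_ifs <;> first | rfl | ring1 | (exfalso; omega) | (simp_all; try ring1)
  · rw [updW_apply_ne _ _ _ _ _ ha]
    by_cases hb : l' = p
    · rw [hb, genEmb_apply_p, genEmb_apply_p, updW_apply_ne _ _ _ _ _ (by omega : p ≠ p + 1)]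
    · rw [genEmb_ne m p s θ c hb ha, genEmb_ne m p s _ c hb ha,
        updW_apply_ne _ _ _ _ _ ha]

lemma feat_p1_eq (σ : ℝ → ℝ) (m₁ m : ℕ → ℕ) (ρ θ : NNParams) (x : ℕ → ℝ) (p : ℕ)
    (hmm : ∀ l, l < p + 1 → m₁ l = m l) (hρ : ∀ l, l < p → ρ l = θ l) (i : ℕ) :
    feat σ m₁ ρ x (p + 1) i
      = σ ((∑ j' ∈ Finset.range (m p), (ρ p).1 i j' * feat σ m θ x p j') + (ρ p).2 i) := by
  have e : feat σ m₁ ρ x (p + 1) i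
      = σ ((∑ j' ∈ Finset.range (m₁ p), (ρ p).1 i j' * feat σ m₁ ρ x p j') + (ρ p).2 i) := rfl
  rw [e, hmm p (by omega), feat_congr σ x p (fun l' hl' => ⟨hmm l' (by omega), hρ l' hl'⟩)]

lemma feat_updW_p (σ : ℝ → ℝ) (m : ℕ → ℕ) (θ : NNParams) (x : ℕ → ℝ) (p s j : ℕ) (t : ℝ) :
    feat σ m (updW θ p s j t) x (p + 1)
      = Function.update (feat σ m θ x (p + 1)) s
          (σ ((∑ j' ∈ Finset.range (m p),
              (if j' = j then t else (θ p).1 s j') * feat σ m θ x p j') + (θ p).2 s)) := by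
  funext i
  rw [feat_p1_eq σ m m (updW θ p s j t) θ x p (fun _ _ => rfl)
    (fun l hl => updW_apply_ne _ _ _ _ _ (by omega)), updW_apply_same]
  dsimp only
  by_cases h : i = s
  · rw [h, Function.update_self]
    congr 2
    apply Finset.sum_congr rfl
    intro j' _
    congr 1
    by_cases hj : j' = j
    · rw [if_pos (⟨rfl, hj⟩ : s = s ∧ j' = j), if_pos hj]
    · rw [if_neg (fun hh => hj hh.2), if_neg hj]
  · rw [Function.update_of_ne h]
    have e2 : feat σ m θ x (p + 1) i
        = σ ((∑ j' ∈ Finset.range (m p), (θ p).1 i j' * feat σ m θ x p j') + (θ p).2 i) := rfl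
    rw [e2]
    congr 2
    apply Finset.sum_congr rfl
    intro j' _
    rw [if_neg (fun hh => h hh.1)]

lemma feat_updB_p (σ : ℝ → ℝ) (m : ℕ → ℕ) (θ : NNParams) (x : ℕ → ℝ) (p s : ℕ) (t : ℝ) :
    feat σ m (updB θ p s t) x (p + 1)
      = Function.update (feat σ m θ x (p + 1)) s
          (σ ((∑ j' ∈ Finset.range (m p), (θ p).1 s j' * feat σ m θ x p j') + t)) := by
  funext i
  rw [feat_p1_eq σ m m (updB θ p s t) θ x p (fun _ _ => rfl)
    (fun l hl => updB_apply_ne _ _ _ _ (by omega)), updB_apply_same]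
  dsimp only
  by_cases h : i = s
  · rw [h, Function.update_self, if_pos rfl]
  · rw [Function.update_of_ne h, if_neg h]
    rfl

lemma feat_updW_split (σ : ℝ → ℝ) (m : ℕ → ℕ) (p s : ℕ) (α : ℝ) (θ : NNParams) (x : ℕ → ℝ)
    (r j : ℕ) (t : ℝ) (i' : ℕ) :
    feat σ (widen m p) (updW (splitEmb m p s α θ) p r j t) x (p + 1) i'
      = σ ((∑ j'' ∈ Finset.range (m p),
          (if i' = r ∧ j'' = j then t
            else if i' = m (p + 1) then (θ p).1 s j'' else (θ p).1 i' j'')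
            * feat σ m θ x p j'')
        + (if i' = m (p + 1) then (θ p).2 s else (θ p).2 i')) := by
  rw [feat_p1_eq σ (widen m p) m (updW (splitEmb m p s α θ) p r j t) θ x p
    (fun l hl => widen_ne m p l (by omega))
    (fun l hl => by
      rw [updW_apply_ne _ _ _ _ _ (by omega : l ≠ p)]
      exact splitEmb_ne m p s α θ (by omega) (by omega)),
    updW_apply_same, splitEmb_apply_p]

lemma feat_updB_split (σ : ℝ → ℝ) (m : ℕ → ℕ) (p s : ℕ) (α : ℝ) (θ : NNParams) (x : ℕ → ℝ)
    (r : ℕ) (t : ℝ) (i' : ℕ) :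
    feat σ (widen m p) (updB (splitEmb m p s α θ) p r t) x (p + 1) i'
      = σ ((∑ j'' ∈ Finset.range (m p),
          (if i' = m (p + 1) then (θ p).1 s j'' else (θ p).1 i' j'') * feat σ m θ x p j'')
        + (if i' = r then t
            else if i' = m (p + 1) then (θ p).2 s else (θ p).2 i')) := by
  rw [feat_p1_eq σ (widen m p) m (updB (splitEmb m p s α θ) p r t) θ x p
    (fun l hl => widen_ne m p l (by omega))
    (fun l hl => by
      rw [updB_apply_ne _ _ _ _ (by omega : l ≠ p)]
      exact splitEmb_ne m p s α θ (by omega) (by omega)),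
    updB_apply_same, splitEmb_apply_p]

lemma preact_split_form (σ : ℝ → ℝ) (m : ℕ → ℕ) (p s : ℕ) (hs : s < m (p + 1)) (α : ℝ)
    (θ θ' : NNParams) (hθ'1 : θ' (p + 1) = splitEmb m p s α θ (p + 1)) (x : ℕ → ℝ)
    (vs vM : ℝ)
    (hfs : feat σ (widen m p) θ' x (p + 1) s = vs)
    (hfM : feat σ (widen m p) θ' x (p + 1) (m (p + 1)) = vM)
    (hfo : ∀ j, j < m (p + 1) → j ≠ s →
      feat σ (widen m p) θ' x (p + 1) j = feat σ m θ x (p + 1) j)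
    (i : ℕ) :
    preact σ (widen m p) θ' x (p + 1) i
      = (∑ j ∈ Finset.range (m (p + 1)),
          (θ (p + 1)).1 i j *
            Function.update (feat σ m θ x (p + 1)) s ((1 - α) * vs + α * vM) j)
        + (θ (p + 1)).2 i := by
  have hsM : ¬ (s = m (p + 1)) := by omega
  have hMs : ¬ (m (p + 1) = s) := by omega
  simp only [preact]
  rw [widen_p1, Finset.sum_range_succ, hθ'1, splitEmb_apply_p1]
  dsimp only
  have hsum := sum_split_at hs
    (fun j => (if j = s then (1 - α) * (θ (p + 1)).1 i s
        else if j = m (p + 1) then α * (θ (p + 1)).1 i s else (θ (p + 1)).1 i j)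
      * feat σ (widen m p) θ' x (p + 1) j)
    (fun j => (θ (p + 1)).1 i j *
      Function.update (feat σ m θ x (p + 1)) s ((1 - α) * vs + α * vM) j)
    (by
      intro j hj hjs
      rw [if_neg hjs, if_neg (by omega), hfo j hj hjs, Function.update_of_ne hjs])
  rw [hsum]
  rw [if_pos rfl, if_neg hMs, if_pos rfl, hfs, hfM, Function.update_self]
  ring

lemma deriv_line_zero (σ : ℝ → ℝ) (hσ : Differentiable ℝ σ) (m : ℕ → ℕ) (K p s : ℕ)
    (hpK : p + 1 ≤ K)
    (loss : (ℕ → ℝ) → (ℕ → ℝ) → ℝ) (hloss : LossDiff loss)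
    {n : ℕ} (X Y : Fin n → ℕ → ℝ) (θ : NNParams)
    (line wline : ℝ → NNParams)
    (F : Fin n → ℝ → ℝ) (hF : ∀ a, Differentiable ℝ (F a)) (t₀ β γ : ℝ) (hβγ : β + γ = 1)
    (hlo : ∀ t l, p + 1 ≤ l → line t l = θ l)
    (hlfeat : ∀ t a, feat σ m (line t) (X a) (p + 1)
        = Function.update (feat σ m θ (X a) (p + 1)) s (F a t))
    (hwlo : ∀ t l, p + 2 ≤ l → wline t l = θ l)
    (hwpre : ∀ t a i, preact σ (widen m p) (wline t) (X a) (p + 1) i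
        = (∑ j' ∈ Finset.range (m (p + 1)),
            (θ (p + 1)).1 i j' *
              Function.update (feat σ m θ (X a) (p + 1)) s (β * F a t + γ * F a t₀) j')
          + (θ (p + 1)).2 i)
    (h0 : deriv (fun t => risk σ m K loss X Y (line t)) t₀ = 0) :
    deriv (fun t => risk σ (widen m p) K loss X Y (wline t)) t₀ = 0 := by
  have hΨ : ∀ a : Fin n, Differentiable ℝ
      (fun v => loss (outE σ m K p θ (Function.update (feat σ m θ (X a) (p + 1)) s v)) (Y a)) :=
    fun a => psi_diff σ hσ m K p θ _ s (Y a) loss hloss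
  have horig : (fun t => risk σ m K loss X Y (line t))
      = fun t => (n : ℝ)⁻¹ * ∑ a : Fin n,
          loss (outE σ m K p θ
            (Function.update (feat σ m θ (X a) (p + 1)) s (F a t))) (Y a) := by
    funext t
    refine risk_eq_outE σ m K p hpK θ m (fun _ _ => rfl) (line t)
      (fun l hl => hlo t l (by omega)) loss X Y
      (fun a => Function.update (feat σ m θ (X a) (p + 1)) s (F a t)) ?_
    intro a i
    simp only [preact]
    rw [hlo t (p + 1) le_rfl, hlfeat t a]
  have hwide : (fun t => risk σ (widen m p) K loss X Y (wline t))
      = fun t => (n : ℝ)⁻¹ * ∑ a : Fin n,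
          loss (outE σ m K p θ (Function.update (feat σ m θ (X a) (p + 1)) s
            (β * F a t + γ * F a t₀))) (Y a) := by
    funext t
    exact risk_eq_outE σ m K p hpK θ (widen m p) (fun l hl => widen_ne m p l (by omega))
      (wline t) (fun l hl => hwlo t l hl) loss X Y
      (fun a => Function.update (feat σ m θ (X a) (p + 1)) s (β * F a t + γ * F a t₀))
      (fun a i => hwpre t a i)
  rw [hwide]
  exact split_deriv_zero
    (fun a v => loss (outE σ m K p θ
      (Function.update (feat σ m θ (X a) (p + 1)) s v)) (Y a))
    F hΨ hF t₀ β γ hβγ (horig ▸ h0)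

lemma analytic_weight (σ : ℝ → ℝ) (hσ : Differentiable ℝ σ) (m : ℕ → ℕ) (K p s : ℕ)
    (hs : s < m (p + 1)) (hpK : p + 1 ≤ K) (α : ℝ)
    (loss : (ℕ → ℝ) → (ℕ → ℝ) → ℝ) (hloss : LossDiff loss)
    {n : ℕ} (X Y : Fin n → ℕ → ℝ) (θ : NNParams) (j : ℕ) (r : ℕ)
    (hr : r = s ∨ r = m (p + 1))
    (h0 : deriv (fun t => risk σ m K loss X Y (updW θ p s j t)) ((θ p).1 s j) = 0) :
    deriv (fun t => risk σ (widen m p) K loss X Y (updW (splitEmb m p s α θ) p r j t))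
      ((θ p).1 s j) = 0 := by
  have hsM : ¬ (s = m (p + 1)) := by omega
  have hMs : ¬ (m (p + 1) = s) := by omega
  set F : Fin n → ℝ → ℝ := fun a t =>
    σ ((∑ j' ∈ Finset.range (m p),
        (if j' = j then t else (θ p).1 s j') * feat σ m θ (X a) p j') + (θ p).2 s) with hFdef
  have hF : ∀ a, Differentiable ℝ (F a) := by
    intro a
    rw [hFdef]
    apply hσ.comp
    apply Differentiable.add_const
    apply Differentiable.fun_sum
    intro j' _
    by_cases hj' : j' = j
    · simp only [if_pos hj']
      exact differentiable_id.mul_const _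
    · simp only [if_neg hj']
      exact differentiable_const _
  have hFt0 : ∀ a, F a ((θ p).1 s j) = feat σ m θ (X a) (p + 1) s := by
    intro a
    rw [hFdef]
    dsimp only
    have e2 : feat σ m θ (X a) (p + 1) s
        = σ ((∑ j' ∈ Finset.range (m p), (θ p).1 s j' * feat σ m θ (X a) p j')
          + (θ p).2 s) := rfl
    rw [e2]
    congr 2
    apply Finset.sum_congr rfl
    intro j' _
    by_cases hj' : j' = j
    · rw [if_pos hj', hj']
    · rw [if_neg hj']
  have hlo : ∀ (t : ℝ) l, p + 1 ≤ l → updW θ p s j t l = θ l :=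
    fun t l hl => updW_apply_ne _ _ _ _ _ (by omega)
  have hlfeat : ∀ (t : ℝ) a, feat σ m (updW θ p s j t) (X a) (p + 1)
      = Function.update (feat σ m θ (X a) (p + 1)) s (F a t) :=
    fun t a => feat_updW_p σ m θ (X a) p s j t
  have hwlo : ∀ (t : ℝ) l, p + 2 ≤ l → updW (splitEmb m p s α θ) p r j t l = θ l := by
    intro t l hl
    rw [updW_apply_ne _ _ _ _ _ (by omega : l ≠ p)]
    exact splitEmb_ne m p s α θ (by omega) (by omega)
  have hθ'1 : ∀ t : ℝ, (updW (splitEmb m p s α θ) p r j t) (p + 1) = splitEmb m p s α θ (p + 1) :=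
    fun t => updW_apply_ne _ _ _ _ _ (by omega : p + 1 ≠ p)
  have hfo : ∀ (t : ℝ) a, ∀ j0, j0 < m (p + 1) → j0 ≠ s →
      feat σ (widen m p) (updW (splitEmb m p s α θ) p r j t) (X a) (p + 1) j0
        = feat σ m θ (X a) (p + 1) j0 := by
    intro t a j0 hj0 hj0s
    rw [feat_updW_split σ m p s α θ (X a) r j t j0]
    have e2 : feat σ m θ (X a) (p + 1) j0
        = σ ((∑ j'' ∈ Finset.range (m p), (θ p).1 j0 j'' * feat σ m θ (X a) p j'')
          + (θ p).2 j0) := rfl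
    rw [e2]
    congr 2
    · apply Finset.sum_congr rfl
      intro j'' _
      rw [if_neg (fun (hh : j0 = r ∧ j'' = j) => by rcases hr with hr | hr <;> omega),
        if_neg (by omega : ¬ j0 = m (p + 1))]
    · rw [if_neg (by omega : ¬ j0 = m (p + 1))]
  rcases hr with hrS | hrM
  · -- r = s
    rw [hrS] at hwlo hθ'1 hfo ⊢
    have hfs : ∀ (t : ℝ) a,
        feat σ (widen m p) (updW (splitEmb m p s α θ) p s j t) (X a) (p + 1) s = F a t := by
      intro t a
      rw [feat_updW_split σ m p s α θ (X a) s j t s, hFdef]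
      dsimp only
      congr 2
      · apply Finset.sum_congr rfl
        intro j'' _
        congr 1
        by_cases hj'' : j'' = j
        · rw [if_pos (⟨rfl, hj''⟩ : s = s ∧ j'' = j), if_pos hj'']
        · rw [if_neg (fun (hh : s = s ∧ j'' = j) => hj'' hh.2), if_neg hsM, if_neg hj'']
      · rw [if_neg hsM]
    have hfM : ∀ (t : ℝ) a,
        feat σ (widen m p) (updW (splitEmb m p s α θ) p s j t) (X a) (p + 1) (m (p + 1))
          = feat σ m θ (X a) (p + 1) s := by
      intro t a
      rw [feat_updW_split σ m p s α θ (X a) s j t (m (p + 1))]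
      have e2 : feat σ m θ (X a) (p + 1) s
          = σ ((∑ j'' ∈ Finset.range (m p), (θ p).1 s j'' * feat σ m θ (X a) p j'')
            + (θ p).2 s) := rfl
      rw [e2]
      congr 2
      · apply Finset.sum_congr rfl
        intro j'' _
        rw [if_neg (fun (hh : m (p + 1) = s ∧ j'' = j) => hMs hh.1), if_pos rfl]
      · rw [if_pos rfl]
    refine deriv_line_zero σ hσ m K p s hpK loss hloss X Y θ _ _ F hF ((θ p).1 s j)
      (1 - α) α (by ring) hlo hlfeat hwlo ?_ h0
    intro t a i
    rw [preact_split_form σ m p s hs α θ (updW (splitEmb m p s α θ) p s j t) (hθ'1 t)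
      (X a) (F a t) (feat σ m θ (X a) (p + 1) s) (hfs t a) (hfM t a) (hfo t a) i,
      hFt0 a]
  · -- r = m (p + 1)
    subst hrM
    have hfs : ∀ (t : ℝ) a,
        feat σ (widen m p) (updW (splitEmb m p s α θ) p (m (p + 1)) j t) (X a) (p + 1) s
          = feat σ m θ (X a) (p + 1) s := by
      intro t a
      rw [feat_updW_split σ m p s α θ (X a) (m (p + 1)) j t s]
      have e2 : feat σ m θ (X a) (p + 1) s
          = σ ((∑ j'' ∈ Finset.range (m p), (θ p).1 s j'' * feat σ m θ (X a) p j'')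
            + (θ p).2 s) := rfl
      rw [e2]
      congr 2
      · apply Finset.sum_congr rfl
        intro j'' _
        rw [if_neg (fun (hh : s = m (p + 1) ∧ j'' = j) => hsM hh.1), if_neg hsM]
      · rw [if_neg hsM]
    have hfM : ∀ (t : ℝ) a,
        feat σ (widen m p) (updW (splitEmb m p s α θ) p (m (p + 1)) j t) (X a) (p + 1)
          (m (p + 1)) = F a t := by
      intro t a
      rw [feat_updW_split σ m p s α θ (X a) (m (p + 1)) j t (m (p + 1)), hFdef]
      dsimp only
      congr 2
      · apply Finset.sum_congr rfl
        intro j'' _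
        congr 1
        by_cases hj'' : j'' = j
        · rw [if_pos (⟨rfl, hj''⟩ : m (p + 1) = m (p + 1) ∧ j'' = j), if_pos hj'']
        · rw [if_neg (fun (hh : m (p + 1) = m (p + 1) ∧ j'' = j) => hj'' hh.2), if_pos rfl,
            if_neg hj'']
      · rw [if_pos rfl]
    refine deriv_line_zero σ hσ m K p s hpK loss hloss X Y θ _ _ F hF ((θ p).1 s j)
      α (1 - α) (by ring) hlo hlfeat hwlo ?_ h0
    intro t a i
    rw [preact_split_form σ m p s hs α θ (updW (splitEmb m p s α θ) p (m (p + 1)) j t)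
      (hθ'1 t) (X a) (feat σ m θ (X a) (p + 1) s) (F a t) (hfs t a) (hfM t a) (hfo t a) i,
      hFt0 a, add_comm (α * F a t) ((1 - α) * feat σ m θ (X a) (p + 1) s)]

lemma analytic_bias (σ : ℝ → ℝ) (hσ : Differentiable ℝ σ) (m : ℕ → ℕ) (K p s : ℕ)
    (hs : s < m (p + 1)) (hpK : p + 1 ≤ K) (α : ℝ)
    (loss : (ℕ → ℝ) → (ℕ → ℝ) → ℝ) (hloss : LossDiff loss)
    {n : ℕ} (X Y : Fin n → ℕ → ℝ) (θ : NNParams) (r : ℕ)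
    (hr : r = s ∨ r = m (p + 1))
    (h0 : deriv (fun t => risk σ m K loss X Y (updB θ p s t)) ((θ p).2 s) = 0) :
    deriv (fun t => risk σ (widen m p) K loss X Y (updB (splitEmb m p s α θ) p r t))
      ((θ p).2 s) = 0 := by
  have hsM : ¬ (s = m (p + 1)) := by omega
  have hMs : ¬ (m (p + 1) = s) := by omega
  set F : Fin n → ℝ → ℝ := fun a t =>
    σ ((∑ j' ∈ Finset.range (m p), (θ p).1 s j' * feat σ m θ (X a) p j') + t) with hFdef
  have hF : ∀ a, Differentiable ℝ (F a) := by
    intro a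
    rw [hFdef]
    exact hσ.comp (differentiable_id.const_add _)
  have hFt0 : ∀ a, F a ((θ p).2 s) = feat σ m θ (X a) (p + 1) s := by
    intro a
    rw [hFdef]
    rfl
  have hlo : ∀ (t : ℝ) l, p + 1 ≤ l → updB θ p s t l = θ l :=
    fun t l hl => updB_apply_ne _ _ _ _ (by omega)
  have hlfeat : ∀ (t : ℝ) a, feat σ m (updB θ p s t) (X a) (p + 1)
      = Function.update (feat σ m θ (X a) (p + 1)) s (F a t) :=
    fun t a => feat_updB_p σ m θ (X a) p s t
  have hwlo : ∀ (t : ℝ) l, p + 2 ≤ l → updB (splitEmb m p s α θ) p r t l = θ l := by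
    intro t l hl
    rw [updB_apply_ne _ _ _ _ (by omega : l ≠ p)]
    exact splitEmb_ne m p s α θ (by omega) (by omega)
  have hθ'1 : ∀ t : ℝ, (updB (splitEmb m p s α θ) p r t) (p + 1) = splitEmb m p s α θ (p + 1) :=
    fun t => updB_apply_ne _ _ _ _ (by omega : p + 1 ≠ p)
  have hfo : ∀ (t : ℝ) a, ∀ j0, j0 < m (p + 1) → j0 ≠ s →
      feat σ (widen m p) (updB (splitEmb m p s α θ) p r t) (X a) (p + 1) j0
        = feat σ m θ (X a) (p + 1) j0 := by
    intro t a j0 hj0 hj0s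
    rw [feat_updB_split σ m p s α θ (X a) r t j0]
    have e2 : feat σ m θ (X a) (p + 1) j0
        = σ ((∑ j'' ∈ Finset.range (m p), (θ p).1 j0 j'' * feat σ m θ (X a) p j'')
          + (θ p).2 j0) := rfl
    rw [e2]
    congr 2
    · apply Finset.sum_congr rfl
      intro j'' _
      rw [if_neg (by omega : ¬ j0 = m (p + 1))]
    · rw [if_neg (fun (hh : j0 = r) => by rcases hr with hr | hr <;> omega),
        if_neg (by omega : ¬ j0 = m (p + 1))]
  rcases hr with hrS | hrM
  · rw [hrS] at hwlo hθ'1 hfo ⊢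
    have hfs : ∀ (t : ℝ) a,
        feat σ (widen m p) (updB (splitEmb m p s α θ) p s t) (X a) (p + 1) s = F a t := by
      intro t a
      rw [feat_updB_split σ m p s α θ (X a) s t s, hFdef]
      dsimp only
      congr 2
      · apply Finset.sum_congr rfl
        intro j'' _
        rw [if_neg hsM]
      · rw [if_pos rfl]
    have hfM : ∀ (t : ℝ) a,
        feat σ (widen m p) (updB (splitEmb m p s α θ) p s t) (X a) (p + 1) (m (p + 1))
          = feat σ m θ (X a) (p + 1) s := by
      intro t a
      rw [feat_updB_split σ m p s α θ (X a) s t (m (p + 1))]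
      have e2 : feat σ m θ (X a) (p + 1) s
          = σ ((∑ j'' ∈ Finset.range (m p), (θ p).1 s j'' * feat σ m θ (X a) p j'')
            + (θ p).2 s) := rfl
      rw [e2]
      congr 2
      · apply Finset.sum_congr rfl
        intro j'' _
        rw [if_pos rfl]
      · rw [if_neg hMs, if_pos rfl]
    refine deriv_line_zero σ hσ m K p s hpK loss hloss X Y θ _ _ F hF ((θ p).2 s)
      (1 - α) α (by ring) hlo hlfeat hwlo ?_ h0
    intro t a i
    rw [preact_split_form σ m p s hs α θ (updB (splitEmb m p s α θ) p s t) (hθ'1 t)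
      (X a) (F a t) (feat σ m θ (X a) (p + 1) s) (hfs t a) (hfM t a) (hfo t a) i,
      hFt0 a]
  · subst hrM
    have hfs : ∀ (t : ℝ) a,
        feat σ (widen m p) (updB (splitEmb m p s α θ) p (m (p + 1)) t) (X a) (p + 1) s
          = feat σ m θ (X a) (p + 1) s := by
      intro t a
      rw [feat_updB_split σ m p s α θ (X a) (m (p + 1)) t s]
      have e2 : feat σ m θ (X a) (p + 1) s
          = σ ((∑ j'' ∈ Finset.range (m p), (θ p).1 s j'' * feat σ m θ (X a) p j'')
            + (θ p).2 s) := rfl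
      rw [e2]
      congr 2
      · apply Finset.sum_congr rfl
        intro j'' _
        rw [if_neg hsM]
      · rw [if_neg hsM, if_neg hsM]
    have hfM : ∀ (t : ℝ) a,
        feat σ (widen m p) (updB (splitEmb m p s α θ) p (m (p + 1)) t) (X a) (p + 1)
          (m (p + 1)) = F a t := by
      intro t a
      rw [feat_updB_split σ m p s α θ (X a) (m (p + 1)) t (m (p + 1)), hFdef]
      dsimp only
      congr 2
      · apply Finset.sum_congr rfl
        intro j'' _
        rw [if_pos rfl]
      · rw [if_pos rfl]
    refine deriv_line_zero σ hσ m K p s hpK loss hloss X Y θ _ _ F hF ((θ p).2 s)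
      α (1 - α) (by ring) hlo hlfeat hwlo ?_ h0
    intro t a i
    rw [preact_split_form σ m p s hs α θ (updB (splitEmb m p s α θ) p (m (p + 1)) t)
      (hθ'1 t) (X a) (feat σ m θ (X a) (p + 1) s) (F a t) (hfs t a) (hfM t a) (hfo t a) i,
      hFt0 a, add_comm (α * F a t) ((1 - α) * feat σ m θ (X a) (p + 1) s)]

end Aux

/-- the one-step splitting embedding preserves criticality of the
empirical risk. -/
theorem one_step_splitting_embedding_criticality
    (K : ℕ) (hK : 1 ≤ K) (m : ℕ → ℕ) (p : ℕ) (hp : p < K)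
    (s : ℕ) (hs : s < m (p + 1)) (α : ℝ)
    (σ : ℝ → ℝ) (hσ : Differentiable ℝ σ)
    (loss : (ℕ → ℝ) → (ℕ → ℝ) → ℝ) (hloss : LossDiff loss)
    (n : ℕ) (X Y : Fin n → ℕ → ℝ) (θ : NNParams)
    (hcrit : IsCritical (risk σ m K loss X Y) m K θ) :
    IsCritical (risk σ (widen m p) K loss X Y) (widen m p) K (splitEmb m p s α θ) := by
  classical
  have hsM : ¬ (s = m (p + 1)) := by omega
  have hMs : ¬ (m (p + 1) = s) := by omega
  have hpK : p + 1 ≤ K := hp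
  have hW : splitEmb m p s α θ = genEmb m p s θ (fun i => α * (θ (p + 1)).1 i s) :=
    splitEmb_eq_genEmb m p s α θ
  constructor
  · intro l hl i hi j hj
    by_cases hlp : l = p
    · rw [hlp] at hi hj ⊢
      rw [widen_ne m p p (by omega)] at hj
      rw [widen_p1] at hi
      by_cases hir : i = s
      · rw [hir]
        have hpt : ((splitEmb m p s α θ) p).1 s j = (θ p).1 s j := by
          rw [splitEmb_apply_p]
          dsimp only
          rw [if_neg hsM]
        rw [hpt]
        exact analytic_weight σ hσ m K p s hs hpK α loss hloss X Y θ j s (Or.inl rfl)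
          (hcrit.1 p (by omega) s hs j hj)
      · by_cases hiM : i = m (p + 1)
        · rw [hiM]
          have hpt : ((splitEmb m p s α θ) p).1 (m (p + 1)) j = (θ p).1 s j := by
            rw [splitEmb_apply_p]
            dsimp only
            rw [if_pos rfl]
          rw [hpt]
          exact analytic_weight σ hσ m K p s hs hpK α loss hloss X Y θ j (m (p + 1))
            (Or.inr rfl) (hcrit.1 p (by omega) s hs j hj)
        · have hi' : i < m (p + 1) := by omega
          have hfun : (fun t => risk σ (widen m p) K loss X Y
              (updW (splitEmb m p s α θ) p i j t))
              = fun t => risk σ m K loss X Y (updW θ p i j t) := by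
            funext t
            rw [hW, updW_genEmb_comm_p m p s θ _ i j t hir hiM]
            exact risk_genEmb σ m K p s hs hpK loss X Y _ _
          have hpt : ((splitEmb m p s α θ) p).1 i j = (θ p).1 i j := by
            rw [splitEmb_apply_p]
            dsimp only
            rw [if_neg hiM]
          rw [hfun, hpt]
          exact hcrit.1 p (by omega) i hi' j hj
    · by_cases hlp1 : l = p + 1
      · rw [hlp1] at hi hj ⊢
        rw [widen_p1] at hj
        rw [widen_ne m p (p + 1 + 1) (by omega)] at hi
        by_cases hjs : j = s
        · rw [hjs]
          have hfun : (fun t => risk σ (widen m p) K loss X Y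
              (updW (splitEmb m p s α θ) (p + 1) i s t))
              = fun t => risk σ m K loss X Y
                  (updW θ (p + 1) i s (t + α * (θ (p + 1)).1 i s)) := by
            funext t
            rw [hW, updW_genEmb_col_s m p s θ _ i t hs]
            exact risk_genEmb σ m K p s hs hpK loss X Y _ _
          have hpt : ((splitEmb m p s α θ) (p + 1)).1 i s = (1 - α) * (θ (p + 1)).1 i s := by
            rw [splitEmb_apply_p1]
            dsimp only
            rw [if_pos rfl]
          rw [hfun, hpt,
            show deriv (fun t => risk σ m K loss X Y
                (updW θ (p + 1) i s (t + α * (θ (p + 1)).1 i s)))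
              ((1 - α) * (θ (p + 1)).1 i s)
              = deriv (fun u => risk σ m K loss X Y (updW θ (p + 1) i s u))
                ((1 - α) * (θ (p + 1)).1 i s + α * (θ (p + 1)).1 i s) from
              deriv_comp_add_const
                (fun u => risk σ m K loss X Y (updW θ (p + 1) i s u))
                (α * (θ (p + 1)).1 i s) ((1 - α) * (θ (p + 1)).1 i s),
            show (1 - α) * (θ (p + 1)).1 i s + α * (θ (p + 1)).1 i s = (θ (p + 1)).1 i s by
              ring]
          exact hcrit.1 (p + 1) (by omega) i hi s hs
        · by_cases hjM : j = m (p + 1)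
          · rw [hjM]
            have hfun : (fun t => risk σ (widen m p) K loss X Y
                (updW (splitEmb m p s α θ) (p + 1) i (m (p + 1)) t))
                = fun t => risk σ m K loss X Y (updW θ (p + 1) i s
                    (((θ (p + 1)).1 i s - α * (θ (p + 1)).1 i s) + t)) := by
              funext t
              rw [hW, updW_genEmb_col_M m p s θ _ i t hs]
              exact risk_genEmb σ m K p s hs hpK loss X Y _ _
            have hpt : ((splitEmb m p s α θ) (p + 1)).1 i (m (p + 1))
                = α * (θ (p + 1)).1 i s := by
              rw [splitEmb_apply_p1]
              dsimp only
              rw [if_neg hMs, if_pos rfl]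
            rw [hfun, hpt,
              show deriv (fun t => risk σ m K loss X Y (updW θ (p + 1) i s
                  (((θ (p + 1)).1 i s - α * (θ (p + 1)).1 i s) + t)))
                (α * (θ (p + 1)).1 i s)
                = deriv (fun u => risk σ m K loss X Y (updW θ (p + 1) i s u))
                  (((θ (p + 1)).1 i s - α * (θ (p + 1)).1 i s) + α * (θ (p + 1)).1 i s) from
                deriv_comp_const_add
                  (fun u => risk σ m K loss X Y (updW θ (p + 1) i s u))
                  ((θ (p + 1)).1 i s - α * (θ (p + 1)).1 i s) (α * (θ (p + 1)).1 i s),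
              show ((θ (p + 1)).1 i s - α * (θ (p + 1)).1 i s) + α * (θ (p + 1)).1 i s
                  = (θ (p + 1)).1 i s by ring]
            exact hcrit.1 (p + 1) (by omega) i hi s hs
          · have hj' : j < m (p + 1) := by omega
            have hfun : (fun t => risk σ (widen m p) K loss X Y
                (updW (splitEmb m p s α θ) (p + 1) i j t))
                = fun t => risk σ m K loss X Y (updW θ (p + 1) i j t) := by
              funext t
              rw [hW, updW_genEmb_comm_p1 m p s θ _ i j t hjs hjM]
              exact risk_genEmb σ m K p s hs hpK loss X Y _ _
            have hpt : ((splitEmb m p s α θ) (p + 1)).1 i j = (θ (p + 1)).1 i j := by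
              rw [splitEmb_apply_p1]
              dsimp only
              rw [if_neg hjs, if_neg hjM]
            rw [hfun, hpt]
            exact hcrit.1 (p + 1) (by omega) i hi j hj'
      · have hfun : (fun t => risk σ (widen m p) K loss X Y
            (updW (splitEmb m p s α θ) l i j t))
            = fun t => risk σ m K loss X Y (updW θ l i j t) := by
          funext t
          rw [hW, updW_genEmb_comm m p s θ _ l i j t hlp hlp1]
          exact risk_genEmb σ m K p s hs hpK loss X Y _ _
        have hpt : ((splitEmb m p s α θ) l).1 i j = (θ l).1 i j := by
          rw [splitEmb_ne m p s α θ hlp hlp1]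
        rw [hfun, hpt]
        rw [widen_ne m p (l + 1) (by omega)] at hi
        rw [widen_ne m p l (by omega)] at hj
        exact hcrit.1 l hl i hi j hj
  · intro l hl i hi
    by_cases hlp : l = p
    · rw [hlp] at hi ⊢
      rw [widen_p1] at hi
      by_cases hir : i = s
      · rw [hir]
        have hpt : ((splitEmb m p s α θ) p).2 s = (θ p).2 s := by
          rw [splitEmb_apply_p]
          dsimp only
          rw [if_neg hsM]
        rw [hpt]
        exact analytic_bias σ hσ m K p s hs hpK α loss hloss X Y θ s (Or.inl rfl)
          (hcrit.2 p (by omega) s hs)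
      · by_cases hiM : i = m (p + 1)
        · rw [hiM]
          have hpt : ((splitEmb m p s α θ) p).2 (m (p + 1)) = (θ p).2 s := by
            rw [splitEmb_apply_p]
            dsimp only
            rw [if_pos rfl]
          rw [hpt]
          exact analytic_bias σ hσ m K p s hs hpK α loss hloss X Y θ (m (p + 1))
            (Or.inr rfl) (hcrit.2 p (by omega) s hs)
        · have hi' : i < m (p + 1) := by omega
          have hfun : (fun t => risk σ (widen m p) K loss X Y
              (updB (splitEmb m p s α θ) p i t))
              = fun t => risk σ m K loss X Y (updB θ p i t) := by
            funext t
            rw [hW, updB_genEmb_comm_p m p s θ _ i t hir hiM]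
            exact risk_genEmb σ m K p s hs hpK loss X Y _ _
          have hpt : ((splitEmb m p s α θ) p).2 i = (θ p).2 i := by
            rw [splitEmb_apply_p]
            dsimp only
            rw [if_neg hiM]
          rw [hfun, hpt]
          exact hcrit.2 p (by omega) i hi'
    · have hfun : (fun t => risk σ (widen m p) K loss X Y
          (updB (splitEmb m p s α θ) l i t))
          = fun t => risk σ m K loss X Y (updB θ l i t) := by
        funext t
        rw [hW, updB_genEmb_comm m p s θ _ l i t hlp]
        exact risk_genEmb σ m K p s hs hpK loss X Y _ _
      have hpt : ((splitEmb m p s α θ) l).2 i = (θ l).2 i := by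
        by_cases h2 : l = p + 1
        · rw [h2, splitEmb_apply_p1]
        · rw [splitEmb_ne m p s α θ hlp h2]
      rw [hfun, hpt]
      rw [widen_ne m p (l + 1) (by omega)] at hi
      exact hcrit.2 l hl i hi


end EmbeddingPrinciple
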